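/- Let f(k) denote the maximum chromatic number of a graph whose edge set can be partitioned into at most k complete bipartite graphs (with f(0)=1). Then f(k+1) ≤ f(k) + f(⌊k/2⌋) for all k ≥ 0. -/

import Mathlib

/-- The edge set of the complete bipartite graph with parts `A` and `B`. -/
def bicliqueEdges {V : Type*} (A B : Set V) : Set (Sym2 V) :=
  {e | ∃ a ∈ A, ∃ b ∈ B, e = s(a, b)}

/-- `G`'s edge set can be partitioned into at most `k` complete bipartite graphs. -/
def HasBicliquePartition {V : Type*} (G : SimpleGraph V) (k : ℕ) : Prop :=
  ∃ A B : Fin k → Set V,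
    (∀ i, Disjoint (A i) (B i)) ∧
    (Set.univ : Set (Fin k)).PairwiseDisjoint (fun i => bicliqueEdges (A i) (B i)) ∧
    (⋃ i, bicliqueEdges (A i) (B i)) = G.edgeSet

/-- `f k` is the maximum chromatic number of a (finite) graph whose edge set can be
partitioned into at most `k` complete bipartite graphs. -/
noncomputable def f (k : ℕ) : ℕ :=
  sSup {n : ℕ | ∃ (V : Type) (_ : Fintype V) (G : SimpleGraph V),
    HasBicliquePartition G k ∧ G.chromaticNumber = (n : ℕ∞)}

open SimpleGraph

lemma bicliqueEdges_comm {V : Type*} (A B : Set V) : bicliqueEdges A B = bicliqueEdges B A := by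
  ext e
  constructor <;> rintro ⟨a, ha, b, hb, rfl⟩ <;> exact ⟨b, hb, a, ha, Sym2.eq_swap⟩

lemma bicliqueEdges_empty_left {V : Type*} (B : Set V) : bicliqueEdges (∅ : Set V) B = ∅ := by
  ext e; simp [bicliqueEdges]

lemma colorable_of_hbp {V : Type*} {G : SimpleGraph V} {k : ℕ}
    (h : HasBicliquePartition G k) : G.Colorable (3 ^ k) := by
  classical
  obtain ⟨A, B, hdisj, -, hcover⟩ := h
  have C : G.Coloring (Fin k → Fin 3) := by
    refine Coloring.mk (fun v i => if v ∈ A i then 0 else if v ∈ B i then 1 else 2) ?_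
    intro u v huv heq
    have he : s(u, v) ∈ G.edgeSet := huv
    rw [← hcover] at he
    obtain ⟨i, a, ha, b, hb, hab⟩ := Set.mem_iUnion.mp he
    have hi := congrFun heq i
    rcases Sym2.eq_iff.mp hab with ⟨h1, h2⟩ | ⟨h1, h2⟩ <;> subst h1 <;> subst h2
    · have hub : u ∉ B i := fun hmem => Set.disjoint_left.mp (hdisj i) ha hmem
      have hva : v ∉ A i := fun hmem => Set.disjoint_right.mp (hdisj i) hb hmem
      simp [ha, hb, hub, hva] at hi
    · have hub : v ∉ B i := fun hmem => Set.disjoint_left.mp (hdisj i) ha hmem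
      have hva : u ∉ A i := fun hmem => Set.disjoint_right.mp (hdisj i) hb hmem
      simp [ha, hb, hub, hva] at hi
  have := C.colorable
  simpa using this

lemma bddAbove_fset (k : ℕ) :
    BddAbove {n : ℕ | ∃ (V : Type) (_ : Fintype V) (G : SimpleGraph V),
      HasBicliquePartition G k ∧ G.chromaticNumber = (n : ℕ∞)} := by
  refine ⟨3 ^ k, ?_⟩
  rintro n ⟨V, _, G, hp, hchi⟩
  have := (colorable_of_hbp hp).chromaticNumber_le
  rw [hchi] at this
  exact_mod_cast this

lemma hbp_of_cover {V : Type*} {G : SimpleGraph V} {m n : ℕ}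
    (A B : Fin m → Set V)
    (hAB : ∀ i, Disjoint (A i) (B i))
    (hpd : (Set.univ : Set (Fin m)).PairwiseDisjoint (fun i => bicliqueEdges (A i) (B i)))
    (hcov : (⋃ i, bicliqueEdges (A i) (B i)) = G.edgeSet)
    (hsupp : {i : Fin m | (bicliqueEdges (A i) (B i)).Nonempty}.ncard ≤ n) :
    HasBicliquePartition G n := by
  classical
  set s : Set (Fin m) := {i : Fin m | (bicliqueEdges (A i) (B i)).Nonempty} with hs
  have hcard : Fintype.card s ≤ Fintype.card (Fin n) := by
    rw [Fintype.card_fin]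
    rwa [Set.ncard_eq_toFinset_card', Set.toFinset_card] at hsupp
  obtain ⟨g⟩ := Function.Embedding.nonempty_of_card_le hcard
  refine ⟨fun j => if h : ∃ i : s, g i = j then A h.choose else ∅,
          fun j => if h : ∃ i : s, g i = j then B h.choose else ∅, ?_, ?_, ?_⟩
  · intro j
    by_cases h : ∃ i : s, g i = j
    · simp only [dif_pos h]; exact hAB _
    · simp only [dif_neg h]; simp
  · intro j₁ _ j₂ _ hne
    by_cases h₁ : ∃ i : s, g i = j₁
    · by_cases h₂ : ∃ i : s, g i = j₂
      · simp only [Function.onFun, dif_pos h₁, dif_pos h₂]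
        have : (h₁.choose : Fin m) ≠ (h₂.choose : Fin m) := by
          intro heq
          apply hne
          rw [← h₁.choose_spec, ← h₂.choose_spec]
          congr 1
          exact Subtype.ext heq
        exact hpd (Set.mem_univ _) (Set.mem_univ _) this
      · simp only [Function.onFun]
        simp only [dif_neg h₂, bicliqueEdges_empty_left]
        exact disjoint_bot_right
    · simp only [Function.onFun]
      simp only [dif_neg h₁, bicliqueEdges_empty_left]
      exact disjoint_bot_left
  · rw [← hcov]
    ext e
    simp only [Set.mem_iUnion]
    constructor
    · rintro ⟨j, hj⟩
      by_cases h : ∃ i : s, g i = j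
      · simp only [dif_pos h] at hj
        exact ⟨h.choose, hj⟩
      · simp only [dif_neg h, bicliqueEdges_empty_left] at hj
        exact absurd hj (Set.notMem_empty e)
    · rintro ⟨i, hi⟩
      have his : i ∈ s := ⟨e, hi⟩
      refine ⟨g ⟨i, his⟩, ?_⟩
      have h : ∃ i' : s, g i' = g ⟨i, his⟩ := ⟨⟨i, his⟩, rfl⟩
      simp only [dif_pos h]
      have : h.choose = ⟨i, his⟩ := g.injective h.choose_spec
      rw [this]
      exact hi

lemma bicliqueEdges_map_mem {V : Type*} {X : Set V} {A B : Set V} {e : Sym2 X}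
    (he : e ∈ bicliqueEdges (Subtype.val ⁻¹' A) (Subtype.val ⁻¹' B)) :
    Sym2.map Subtype.val e ∈ bicliqueEdges A B := by
  obtain ⟨a, ha, b, hb, rfl⟩ := he
  exact ⟨↑a, ha, ↑b, hb, rfl⟩

lemma restrict_hbp {V : Type*} {G : SimpleGraph V} {m : ℕ}
    (A B : Fin m → Set V) (S T X : Set V)
    (hAB : ∀ i, Disjoint (A i) (B i))
    (hpd : (Set.univ : Set (Fin m)).PairwiseDisjoint (fun i => bicliqueEdges (A i) (B i)))
    (hcov : (⋃ i, bicliqueEdges (A i) (B i)) ∪ bicliqueEdges S T = G.edgeSet)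
    (hX : ∀ a ∈ S, ∀ b ∈ T, ¬(a ∈ X ∧ b ∈ X)) {n : ℕ}
    (hsupp : {i : Fin m | ∃ a ∈ A i, a ∈ X ∧ ∃ b ∈ B i, b ∈ X}.ncard ≤ n) :
    HasBicliquePartition (G.induce X) n := by
  apply hbp_of_cover (fun i => (Subtype.val ⁻¹' A i : Set X))
    (fun i => (Subtype.val ⁻¹' B i : Set X))
  · intro i
    exact (hAB i).preimage _
  · intro i _ j _ hne
    simp only [Function.onFun]
    rw [Set.disjoint_left]
    intro e he1 he2
    exact Set.disjoint_left.mp (hpd (Set.mem_univ i) (Set.mem_univ j) hne)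
      (bicliqueEdges_map_mem he1) (bicliqueEdges_map_mem he2)
  · ext e
    induction e using Sym2.ind with
    | _ u v =>
      simp only [Set.mem_iUnion, SimpleGraph.mem_edgeSet, SimpleGraph.comap_adj]
      constructor
      · rintro ⟨i, hi⟩
        have h2 : s(↑u, ↑v) ∈ G.edgeSet := by
          rw [← hcov]
          exact Set.mem_union_left _ (Set.mem_iUnion.mpr ⟨i, bicliqueEdges_map_mem hi⟩)
        exact h2
      · intro hadj
        have h2 : s((u : V), (v : V)) ∈ G.edgeSet := hadj
        rw [← hcov] at h2
        rcases h2 with h2 | h2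
        · obtain ⟨i, a, ha, b, hb, hab⟩ := Set.mem_iUnion.mp h2
          rcases Sym2.eq_iff.mp hab with ⟨h1', h2'⟩ | ⟨h1', h2'⟩
          · exact ⟨i, u, show (u : V) ∈ A i from h1'.symm ▸ ha,
              v, show (v : V) ∈ B i from h2'.symm ▸ hb, rfl⟩
          · exact ⟨i, v, show (v : V) ∈ A i from h2'.symm ▸ ha,
              u, show (u : V) ∈ B i from h1'.symm ▸ hb, Sym2.eq_swap⟩
        · obtain ⟨a, ha, b, hb, hab⟩ := h2
          rcases Sym2.eq_iff.mp hab with ⟨h1', h2'⟩ | ⟨h1', h2'⟩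
          · exact absurd ⟨h1' ▸ u.2, h2' ▸ v.2⟩ (hX a ha b hb)
          · exact absurd ⟨h2' ▸ v.2, h1' ▸ u.2⟩ (hX a ha b hb)
  · refine le_trans (Set.ncard_le_ncard ?_ (Set.toFinite _)) hsupp
    rintro i ⟨e, he⟩
    obtain ⟨a, ha, b, hb, rfl⟩ := he
    exact ⟨↑a, ha, a.2, ↑b, hb, b.2⟩

lemma colorable_union {V : Type*} {G : SimpleGraph V} (S : Set V) {a b : ℕ}
    (h1 : (G.induce S).Colorable a) (h2 : (G.induce Sᶜ).Colorable b) :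
    G.Colorable (a + b) := by
  classical
  obtain ⟨C1⟩ := h1
  obtain ⟨C2⟩ := h2
  have C : G.Coloring (Fin a ⊕ Fin b) := by
    refine Coloring.mk
      (fun v => if h : v ∈ S then Sum.inl (C1 ⟨v, h⟩) else Sum.inr (C2 ⟨v, h⟩)) ?_
    intro u v huv heq
    by_cases hu : u ∈ S <;> by_cases hv : v ∈ S <;>
      simp only [dif_pos, dif_neg, hu, hv, reduceDIte, Sum.inl.injEq, Sum.inr.injEq,
        reduceCtorEq] at heq
    · exact C1.valid (by exact huv : (G.induce S).Adj ⟨u, hu⟩ ⟨v, hv⟩) heq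
    · exact C2.valid (by exact huv : (G.induce Sᶜ).Adj ⟨u, hu⟩ ⟨v, hv⟩) heq
  simpa using C.colorable

lemma key {V : Type} [Fintype V] {G : SimpleGraph V} {k : ℕ}
    (A B : Fin k → Set V) (S T : Set V)
    (hAB : ∀ i, Disjoint (A i) (B i)) (hST : Disjoint S T)
    (hpd : (Set.univ : Set (Fin k)).PairwiseDisjoint (fun i => bicliqueEdges (A i) (B i)))
    (hcov : (⋃ i, bicliqueEdges (A i) (B i)) ∪ bicliqueEdges S T = G.edgeSet)
    (hcard : {i : Fin k | ∃ a ∈ A i, a ∈ S ∧ ∃ b ∈ B i, b ∈ S}.ncard ≤ k / 2) :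
    G.chromaticNumber ≤ ((f k + f (k / 2) : ℕ) : ℕ∞) := by
  classical
  have h1 : HasBicliquePartition (G.induce Sᶜ) k := by
    apply restrict_hbp A B S T Sᶜ hAB hpd hcov
    · rintro a ha b hb ⟨haX, -⟩
      exact haX ha
    · refine le_trans (Set.ncard_le_ncard (Set.subset_univ _) (Set.toFinite _)) ?_
      simp [Set.ncard_univ]
  have h2 : HasBicliquePartition (G.induce S) (k / 2) := by
    apply restrict_hbp A B S T S hAB hpd hcov
    · rintro a ha b hb ⟨-, hbS⟩
      exact Set.disjoint_left.mp hST hbS hb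
    · exact hcard
  haveI : Fintype ↥S := Fintype.ofFinite _
  haveI : Fintype ↥(Sᶜ) := Fintype.ofFinite _
  have hc1 : (G.induce Sᶜ).Colorable ((G.induce Sᶜ).chromaticNumber.toNat) :=
    (G.induce Sᶜ).colorable_chromaticNumber_of_fintype
  have hc2 : (G.induce S).Colorable ((G.induce S).chromaticNumber.toNat) :=
    (G.induce S).colorable_chromaticNumber_of_fintype
  have e1 : (G.induce Sᶜ).chromaticNumber = (((G.induce Sᶜ).chromaticNumber.toNat : ℕ) : ℕ∞) := by
    rw [ENat.coe_toNat]
    exact chromaticNumber_ne_top_iff_exists.mpr ⟨_, (G.induce Sᶜ).colorable_of_fintype⟩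
  have e2 : (G.induce S).chromaticNumber = (((G.induce S).chromaticNumber.toNat : ℕ) : ℕ∞) := by
    rw [ENat.coe_toNat]
    exact chromaticNumber_ne_top_iff_exists.mpr ⟨_, (G.induce S).colorable_of_fintype⟩
  have hn1 : (G.induce Sᶜ).chromaticNumber.toNat ≤ f k :=
    le_csSup (bddAbove_fset k) ⟨↥(Sᶜ), inferInstance, G.induce Sᶜ, h1, e1⟩
  have hn2 : (G.induce S).chromaticNumber.toNat ≤ f (k / 2) :=
    le_csSup (bddAbove_fset (k / 2)) ⟨↥S, inferInstance, G.induce S, h2, e2⟩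
  have hcol : G.Colorable (f k + f (k / 2)) := by
    refine (colorable_union S hc2 hc1).mono ?_
    omega
  exact hcol.chromaticNumber_le

/-- The recursive bound `f(k+1) ≤ f(k) + f(⌊k/2⌋)`. -/
theorem stmt_6 (k : ℕ) : f (k + 1) ≤ f k + f (k / 2) := by
  classical
  apply csSup_le
  · refine ⟨0, Empty, inferInstance, ⊥, ⟨fun _ => ∅, fun _ => ∅, by simp, ?_, ?_⟩, ?_⟩
    · intro i _ j _ _
      simp [Function.onFun, bicliqueEdges_empty_left]
    · simp [bicliqueEdges_empty_left]
    · simp [SimpleGraph.chromaticNumber_eq_zero_of_isEmpty]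
  rintro n ⟨V, hV, G, ⟨A, B, hAB, hpd, hcov⟩, hchi⟩
  haveI := hV
  set A' : Fin k → Set V := fun i => A i.castSucc with hA'
  set B' : Fin k → Set V := fun i => B i.castSucc with hB'
  set S := A (Fin.last k) with hS
  set T := B (Fin.last k) with hT
  have hAB' : ∀ i, Disjoint (A' i) (B' i) := fun i => hAB _
  have hST : Disjoint S T := hAB _
  have hpd' : (Set.univ : Set (Fin k)).PairwiseDisjoint
      (fun i => bicliqueEdges (A' i) (B' i)) := by
    intro i _ j _ hne'
    exact hpd (Set.mem_univ _) (Set.mem_univ _)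
      (by simpa using (Fin.castSucc_injective k).ne hne')
  have hpdS : ∀ i : Fin k, Disjoint (bicliqueEdges (A' i) (B' i)) (bicliqueEdges S T) :=
    fun i => hpd (Set.mem_univ _) (Set.mem_univ _) (Fin.castSucc_lt_last i).ne
  have hcov' : (⋃ i, bicliqueEdges (A' i) (B' i)) ∪ bicliqueEdges S T = G.edgeSet := by
    rw [← hcov]
    ext e
    simp only [Set.mem_union, Set.mem_iUnion]
    constructor
    · rintro (⟨i, hi⟩ | h)
      exacts [⟨i.castSucc, hi⟩, ⟨Fin.last k, h⟩]
    · rintro ⟨i, hi⟩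
      rcases Fin.eq_castSucc_or_eq_last i with ⟨j, rfl⟩ | rfl
      exacts [Or.inl ⟨j, hi⟩, Or.inr hi]
  set TA := {i : Fin k | ∃ a ∈ A' i, a ∈ S ∧ ∃ b ∈ B' i, b ∈ S} with hTA'
  set TB := {i : Fin k | ∃ a ∈ A' i, a ∈ T ∧ ∃ b ∈ B' i, b ∈ T} with hTB'
  have hdisjT : Disjoint TA TB := by
    rw [Set.disjoint_left]
    rintro i ⟨a₁, ha₁, ha₁S, b₁, hb₁, hb₁S⟩ ⟨a₂, ha₂, ha₂T, b₂, hb₂, hb₂T⟩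
    exact Set.disjoint_left.mp (hpdS i) ⟨a₁, ha₁, b₂, hb₂, rfl⟩ ⟨a₁, ha₁S, b₂, hb₂T, rfl⟩
  have hsum : TA.ncard + TB.ncard ≤ k := by
    rw [← Set.ncard_union_eq hdisjT (Set.toFinite _) (Set.toFinite _)]
    refine le_trans (Set.ncard_le_ncard (Set.subset_univ _) (Set.toFinite _)) ?_
    simp [Set.ncard_univ]
  have hfin : G.chromaticNumber ≤ ((f k + f (k / 2) : ℕ) : ℕ∞) := by
    by_cases hTAle : TA.ncard ≤ k / 2
    · exact key A' B' S T hAB' hST hpd' hcov' hTAle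
    · have hTBle : TB.ncard ≤ k / 2 := by omega
      exact key A' B' T S hAB' hST.symm hpd'
        (by rw [bicliqueEdges_comm T S]; exact hcov') hTBle
  rw [hchi] at hfin
  exact_mod_cast hfin
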